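/- Let λ, μ ∈ (0,∞) and 0 < t < T. For all u, r ∈ [0,1], the minimiser of s ↦ I_{1,t}(u,s) + I_{1,T−t}(s,r) over s ∈ [0,1] is unique; that is, there is exactly one s* ∈ [0,1] with I_{1,t}(u,s*) + I_{1,T−t}(s*,r) = I_{1,T}(u,r), and for every s ∈ [0,1] with s ≠ s* one has I_{1,t}(u,s) + I_{1,T−t}(s,r) > I_{1,T}(u,r). -/

import Mathlib

noncomputable section

open MeasureTheory Real Filter

/-- Probability that an initially inactive edge is active at time `t`. -/
def p01 (lam mu t : ℝ) : ℝ := (lam - lam * Real.exp (-(t * (lam + mu)))) / (lam + mu)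

/-- Probability that an initially active edge is active at time `t`. -/
def p11 (lam mu t : ℝ) : ℝ := (lam + mu * Real.exp (-(t * (lam + mu)))) / (lam + mu)

/-- The cumulant-type function `J_{t,v}(u)`. -/
def Jfun (lam mu t v u : ℝ) : ℝ :=
  u * Real.log (1 - p11 lam mu t + Real.exp v * p11 lam mu t) +
  (1 - u) * Real.log (1 - p01 lam mu t + Real.exp v * p01 lam mu t)

/-- The one-step rate function `I_{1,t}(u,x) = sup_v [v x - J_{t,v}(u)]`. -/
def I1 (lam mu t u x : ℝ) : ℝ := ⨆ v : ℝ, (v * x - Jfun lam mu t v u)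

namespace RateAux

def phi (p v : ℝ) : ℝ := Real.log (1 - p + Real.exp v * p)
def phi' (p v : ℝ) : ℝ := Real.exp v * p / (1 - p + Real.exp v * p)
def K (p q u v : ℝ) : ℝ := u * phi p v + (1 - u) * phi q v
def K' (p q u v : ℝ) : ℝ := u * phi' p v + (1 - u) * phi' q v

lemma base_pos {p : ℝ} (hp0 : 0 < p) (hp1 : p < 1) (v : ℝ) :
    0 < 1 - p + Real.exp v * p := by
  have := Real.exp_pos v; nlinarith

lemma phi_hasDerivAt {p : ℝ} (hp0 : 0 < p) (hp1 : p < 1) (v : ℝ) :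
    HasDerivAt (phi p) (phi' p v) v := by
  have h1 : HasDerivAt (fun v => 1 - p + Real.exp v * p) (Real.exp v * p) v := by
    simpa using ((Real.hasDerivAt_exp v).mul_const p).const_add (1 - p)
  exact h1.log (base_pos hp0 hp1 v).ne'

lemma K_hasDerivAt {p q : ℝ} (hp0 : 0 < p) (hp1 : p < 1) (hq0 : 0 < q) (hq1 : q < 1)
    (u v : ℝ) : HasDerivAt (K p q u) (K' p q u v) v := by
  exact ((phi_hasDerivAt hp0 hp1 v).const_mul u).add
    ((phi_hasDerivAt hq0 hq1 v).const_mul (1 - u))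

lemma phi'_pos {p : ℝ} (hp0 : 0 < p) (hp1 : p < 1) (v : ℝ) : 0 < phi' p v :=
  div_pos (by positivity) (base_pos hp0 hp1 v)

lemma phi'_lt_one {p : ℝ} (hp0 : 0 < p) (hp1 : p < 1) (v : ℝ) : phi' p v < 1 := by
  rw [phi', div_lt_one (base_pos hp0 hp1 v)]; nlinarith [Real.exp_pos v]

lemma phi'_strictMono {p : ℝ} (hp0 : 0 < p) (hp1 : p < 1) : StrictMono (phi' p) := by
  intro v1 v2 h
  rw [phi', phi', div_lt_div_iff₀ (base_pos hp0 hp1 v1) (base_pos hp0 hp1 v2)]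
  nlinarith [mul_pos (sub_pos.2 (Real.exp_lt_exp.2 h)) (mul_pos hp0 (sub_pos.2 hp1))]

lemma convex_lt {a b a' b' u : ℝ} (ha : a < a') (hb : b < b') (hu0 : 0 ≤ u)
    (hu1 : u ≤ 1) : u * a + (1 - u) * b < u * a' + (1 - u) * b' := by
  rcases eq_or_lt_of_le hu0 with h | h
  · simp only [← h]; linarith
  · have h1 : u * a < u * a' := by nlinarith
    have h2 : (1 - u) * b ≤ (1 - u) * b' := by nlinarith
    linarith

lemma K'_pos {p q : ℝ} (hp0 : 0 < p) (hp1 : p < 1) (hq0 : 0 < q) (hq1 : q < 1)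
    {u : ℝ} (hu0 : 0 ≤ u) (hu1 : u ≤ 1) (v : ℝ) : 0 < K' p q u v := by
  have := convex_lt (phi'_pos hp0 hp1 v) (phi'_pos hq0 hq1 v) hu0 hu1
  rw [K']; linarith

lemma K'_lt_one {p q : ℝ} (hp0 : 0 < p) (hp1 : p < 1) (hq0 : 0 < q) (hq1 : q < 1)
    {u : ℝ} (hu0 : 0 ≤ u) (hu1 : u ≤ 1) (v : ℝ) : K' p q u v < 1 := by
  have := convex_lt (phi'_lt_one hp0 hp1 v) (phi'_lt_one hq0 hq1 v) hu0 hu1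
  rw [K']; linarith

lemma K'_strictMono {p q : ℝ} (hp0 : 0 < p) (hp1 : p < 1) (hq0 : 0 < q) (hq1 : q < 1)
    {u : ℝ} (hu0 : 0 ≤ u) (hu1 : u ≤ 1) : StrictMono (K' p q u) := by
  intro v1 v2 h
  exact convex_lt (phi'_strictMono hp0 hp1 h) (phi'_strictMono hq0 hq1 h) hu0 hu1

lemma K'_continuous {p q : ℝ} (hp0 : 0 < p) (hp1 : p < 1) (hq0 : 0 < q) (hq1 : q < 1)
    (u : ℝ) : Continuous (K' p q u) := by
  have hc : ∀ r : ℝ, 0 < r → r < 1 → Continuous (phi' r) := by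
    intro r h0 h1
    exact (Real.continuous_exp.mul continuous_const).div
      (continuous_const.add (Real.continuous_exp.mul continuous_const))
      (fun v => (base_pos h0 h1 v).ne')
  exact (continuous_const.mul (hc p hp0 hp1)).add (continuous_const.mul (hc q hq0 hq1))

lemma phi'_tendsto_atBot {p : ℝ} (hp0 : 0 < p) (hp1 : p < 1) :
    Tendsto (phi' p) atBot (nhds 0) := by
  have h : Tendsto (fun v => Real.exp v * p) atBot (nhds 0) := by
    simpa using Real.tendsto_exp_atBot.mul_const p
  have hd : Tendsto (fun v => 1 - p + Real.exp v * p) atBot (nhds (1 - p)) := by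
    simpa using h.const_add (1 - p)
  have := h.div hd (by linarith)
  rw [zero_div] at this
  exact this

lemma phi'_eq (p v : ℝ) (hp0 : 0 < p) (hp1 : p < 1) :
    phi' p v = p / ((1 - p) * Real.exp (-v) + p) := by
  have hdp : 0 < (1 - p) * Real.exp (-v) + p := by
    have := Real.exp_pos (-v); nlinarith
  rw [phi', div_eq_div_iff (base_pos hp0 hp1 v).ne' hdp.ne', Real.exp_neg]
  field_simp

lemma phi'_tendsto_atTop {p : ℝ} (hp0 : 0 < p) (hp1 : p < 1) :
    Tendsto (phi' p) atTop (nhds 1) := by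
  have h : Tendsto (fun v : ℝ => Real.exp (-v)) atTop (nhds 0) := by
    exact Real.tendsto_exp_atBot.comp tendsto_neg_atTop_atBot
  have hd : Tendsto (fun v => (1 - p) * Real.exp (-v) + p) atTop (nhds p) := by
    have := (h.const_mul (1 - p)).add_const p
    simpa using this
  have := (tendsto_const_nhds (x := p) (f := atTop (α := ℝ))).div hd hp0.ne'
  rw [div_self hp0.ne'] at this
  exact Tendsto.congr (fun v => (phi'_eq p v hp0 hp1).symm) this

lemma K'_tendsto_atBot {p q : ℝ} (hp0 : 0 < p) (hp1 : p < 1) (hq0 : 0 < q) (hq1 : q < 1)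
    (u : ℝ) : Tendsto (K' p q u) atBot (nhds 0) := by
  have := ((phi'_tendsto_atBot hp0 hp1).const_mul u).add
    ((phi'_tendsto_atBot hq0 hq1).const_mul (1 - u))
  simp only [mul_zero, add_zero] at this
  exact this

lemma K'_tendsto_atTop {p q : ℝ} (hp0 : 0 < p) (hp1 : p < 1) (hq0 : 0 < q) (hq1 : q < 1)
    (u : ℝ) : Tendsto (K' p q u) atTop (nhds 1) := by
  have := ((phi'_tendsto_atTop hp0 hp1).const_mul u).add
    ((phi'_tendsto_atTop hq0 hq1).const_mul (1 - u))
  have h2 : u * 1 + (1 - u) * 1 = 1 := by ring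
  rw [h2] at this
  exact this

lemma K'_surj {p q : ℝ} (hp0 : 0 < p) (hp1 : p < 1) (hq0 : 0 < q) (hq1 : q < 1)
    {u m : ℝ} (hu0 : 0 ≤ u) (hu1 : u ≤ 1) (hm0 : 0 < m) (hm1 : m < 1) :
    ∃ v, K' p q u v = m := by
  obtain ⟨v1, hv1⟩ := ((K'_tendsto_atBot hp0 hp1 hq0 hq1 u).eventually_lt_const hm0).exists
  obtain ⟨v2, hv2⟩ := ((K'_tendsto_atTop hp0 hp1 hq0 hq1 u).eventually_const_lt hm1).exists
  have hv12 : v1 ≤ v2 := by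
    by_contra h
    exact absurd ((K'_strictMono hp0 hp1 hq0 hq1 hu0 hu1).monotone (le_of_not_ge h))
      (by linarith)
  have := intermediate_value_Icc hv12 ((K'_continuous hp0 hp1 hq0 hq1 u).continuousOn)
  obtain ⟨v, _, hv⟩ := this ⟨hv1.le, hv2.le⟩
  exact ⟨v, hv⟩


section MVT

variable {p q u : ℝ} (hp0 : 0 < p) (hp1 : p < 1) (hq0 : 0 < q) (hq1 : q < 1)
  (hu0 : 0 ≤ u) (hu1 : u ≤ 1)

include hp0 hp1 hq0 hq1 hu0 hu1

lemma K_slope {v1 v2 : ℝ} (h : v1 < v2) :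
    ∃ ξ ∈ Set.Ioo v1 v2, K p q u v2 - K p q u v1 = K' p q u ξ * (v2 - v1) := by
  obtain ⟨ξ, hξ, hs⟩ := exists_hasDerivAt_eq_slope (K p q u) (K' p q u) h
    (fun v _ => (K_hasDerivAt hp0 hp1 hq0 hq1 u v).continuousAt.continuousWithinAt)
    (fun v _ => K_hasDerivAt hp0 hp1 hq0 hq1 u v)
  refine ⟨ξ, hξ, ?_⟩
  rw [hs, div_mul_cancel₀ _ (sub_ne_zero.2 h.ne')]

lemma crit_max {v0 m : ℝ} (h0 : K' p q u v0 = m) (v : ℝ) :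
    v * m - K p q u v ≤ v0 * m - K p q u v0 := by
  rcases lt_trichotomy v v0 with h | h | h
  · obtain ⟨ξ, hξ, hs⟩ := K_slope hp0 hp1 hq0 hq1 hu0 hu1 h
    have : K' p q u ξ < m := h0 ▸ K'_strictMono hp0 hp1 hq0 hq1 hu0 hu1 hξ.2
    nlinarith [hξ.1, hξ.2]
  · rw [h]
  · obtain ⟨ξ, hξ, hs⟩ := K_slope hp0 hp1 hq0 hq1 hu0 hu1 h
    have : m < K' p q u ξ := h0 ▸ K'_strictMono hp0 hp1 hq0 hq1 hu0 hu1 hξ.1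
    nlinarith [hξ.1, hξ.2]

lemma crit_strict {v0 vx m x : ℝ} (h0 : K' p q u v0 = m) (hx : K' p q u vx = x)
    (hne : x ≠ m) : v0 * x - K p q u v0 < vx * x - K p q u vx := by
  have hvne : vx ≠ v0 := fun h => hne (by rw [← hx, h, h0])
  rcases lt_or_gt_of_ne hvne with h | h
  · obtain ⟨ξ, hξ, hs⟩ := K_slope hp0 hp1 hq0 hq1 hu0 hu1 h
    have h1 : x < K' p q u ξ := hx ▸ K'_strictMono hp0 hp1 hq0 hq1 hu0 hu1 hξ.1
    nlinarith [hξ.1, hξ.2]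
  · obtain ⟨ξ, hξ, hs⟩ := K_slope hp0 hp1 hq0 hq1 hu0 hu1 h
    have h1 : K' p q u ξ < x := hx ▸ K'_strictMono hp0 hp1 hq0 hq1 hu0 hu1 hξ.2
    nlinarith [hξ.1, hξ.2]

lemma strict_gt {v0 x : ℝ} (hx0 : 0 ≤ x) (hx1 : x ≤ 1) (hne : x ≠ K' p q u v0) :
    ∃ v, v0 * x - K p q u v0 < v * x - K p q u v := by
  rcases eq_or_lt_of_le hx0 with h | hx0'
  · refine ⟨v0 - 1, ?_⟩
    obtain ⟨ξ, hξ, hs⟩ := K_slope hp0 hp1 hq0 hq1 hu0 hu1 (show v0 - 1 < v0 by linarith)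
    have := K'_pos hp0 hp1 hq0 hq1 hu0 hu1 ξ
    nlinarith
  rcases eq_or_lt_of_le hx1 with h | hx1'
  · refine ⟨v0 + 1, ?_⟩
    obtain ⟨ξ, hξ, hs⟩ := K_slope hp0 hp1 hq0 hq1 hu0 hu1 (show v0 < v0 + 1 by linarith)
    have := K'_lt_one hp0 hp1 hq0 hq1 hu0 hu1 ξ
    rw [h]; nlinarith
  · obtain ⟨vx, hvx⟩ := K'_surj hp0 hp1 hq0 hq1 hu0 hu1 hx0' hx1'
    exact ⟨vx, crit_strict hp0 hp1 hq0 hq1 hu0 hu1 rfl hvx hne⟩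

lemma K_ge_L0 (v : ℝ) :
    u * Real.log (1 - p) + (1 - u) * Real.log (1 - q) ≤ K p q u v := by
  have h1 : Real.log (1 - p) ≤ phi p v :=
    Real.log_le_log (by linarith) (by nlinarith [Real.exp_pos v])
  have h2 : Real.log (1 - q) ≤ phi q v :=
    Real.log_le_log (by linarith) (by nlinarith [Real.exp_pos v])
  rw [K]; nlinarith

lemma K_ge_L1 (v : ℝ) :
    v + (u * Real.log p + (1 - u) * Real.log q) ≤ K p q u v := by
  have key : ∀ r : ℝ, 0 < r → r < 1 → v + Real.log r ≤ phi r v := by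
    intro r h0 h1
    have hl : Real.log (Real.exp v * r) = v + Real.log r := by
      rw [Real.log_mul (Real.exp_pos v).ne' h0.ne', Real.log_exp]
    rw [← hl]
    exact Real.log_le_log (by positivity) (by nlinarith [Real.exp_pos v])
  have h1 := key p hp0 hp1
  have h2 := key q hq0 hq1
  rw [K]; nlinarith

lemma obj_le {x : ℝ} (hx0 : 0 ≤ x) (hx1 : x ≤ 1) (v : ℝ) :
    v * x - K p q u v ≤ x * (-(u * Real.log p + (1 - u) * Real.log q)) +
      (1 - x) * (-(u * Real.log (1 - p) + (1 - u) * Real.log (1 - q))) := by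
  have h0 := K_ge_L0 hp0 hp1 hq0 hq1 hu0 hu1 v
  have h1 := K_ge_L1 hp0 hp1 hq0 hq1 hu0 hu1 v
  nlinarith

lemma bdd {x : ℝ} (hx0 : 0 ≤ x) (hx1 : x ≤ 1) :
    BddAbove (Set.range fun v => v * x - K p q u v) := by
  refine ⟨x * (-(u * Real.log p + (1 - u) * Real.log q)) +
      (1 - x) * (-(u * Real.log (1 - p) + (1 - u) * Real.log (1 - q))), ?_⟩
  rintro _ ⟨v, rfl⟩
  exact obj_le hp0 hp1 hq0 hq1 hu0 hu1 hx0 hx1 v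

lemma sup_eq_crit {v0 x : ℝ} (h0 : K' p q u v0 = x) :
    (⨆ v, v * x - K p q u v) = v0 * x - K p q u v0 := by
  refine le_antisymm (ciSup_le (crit_max hp0 hp1 hq0 hq1 hu0 hu1 h0)) ?_
  have hx0 : 0 ≤ x := (h0 ▸ K'_pos hp0 hp1 hq0 hq1 hu0 hu1 v0).le
  have hx1 : x ≤ 1 := (h0 ▸ K'_lt_one hp0 hp1 hq0 hq1 hu0 hu1 v0).le
  exact le_ciSup (bdd hp0 hp1 hq0 hq1 hu0 hu1 hx0 hx1) v0

lemma K_tendsto_atBot :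
    Tendsto (K p q u) atBot
      (nhds (u * Real.log (1 - p) + (1 - u) * Real.log (1 - q))) := by
  have hphi : ∀ r : ℝ, 0 < r → r < 1 →
      Tendsto (phi r) atBot (nhds (Real.log (1 - r))) := by
    intro r h0 h1
    have hin : Tendsto (fun v => 1 - r + Real.exp v * r) atBot (nhds (1 - r)) := by
      simpa using (Real.tendsto_exp_atBot.mul_const r).const_add (1 - r)
    exact ((Real.continuousAt_log (by linarith)).tendsto).comp hin
  exact ((hphi p hp0 hp1).const_mul u).add ((hphi q hq0 hq1).const_mul (1 - u))

lemma sup_zero :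
    (⨆ v, v * 0 - K p q u v) =
      -(u * Real.log (1 - p) + (1 - u) * Real.log (1 - q)) := by
  refine le_antisymm (ciSup_le fun v => by
    have := K_ge_L0 hp0 hp1 hq0 hq1 hu0 hu1 v; linarith) ?_
  have hb := bdd hp0 hp1 hq0 hq1 hu0 hu1 (le_refl (0:ℝ)) zero_le_one
  have ht : Tendsto (fun v => -K p q u v) atBot
      (nhds (-(u * Real.log (1 - p) + (1 - u) * Real.log (1 - q)))) :=
    (K_tendsto_atBot hp0 hp1 hq0 hq1 hu0 hu1).neg
  refine le_of_tendsto ht (Filter.Eventually.of_forall fun v => ?_)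
  calc -K p q u v = v * 0 - K p q u v := by ring
  _ ≤ _ := le_ciSup hb v

lemma phi_sub (v : ℝ) : phi p v - v = Real.log ((1 - p) * Real.exp (-v) + p) := by
  have h2 : 0 < (1 - p) * Real.exp (-v) + p := by
    have := Real.exp_pos (-v); nlinarith
  have h3 : (1 - p + Real.exp v * p) = Real.exp v * ((1 - p) * Real.exp (-v) + p) := by
    rw [Real.exp_neg]; field_simp
  rw [phi, h3, Real.log_mul (Real.exp_pos v).ne' h2.ne', Real.log_exp]
  ring

lemma sup_one :
    (⨆ v, v * 1 - K p q u v) = -(u * Real.log p + (1 - u) * Real.log q) := by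
  refine le_antisymm (ciSup_le fun v => by
    have := K_ge_L1 hp0 hp1 hq0 hq1 hu0 hu1 v; linarith) ?_
  have hb := bdd hp0 hp1 hq0 hq1 hu0 hu1 zero_le_one (le_refl (1:ℝ))
  have hphi : ∀ r : ℝ, 0 < r → r < 1 →
      Tendsto (fun v => phi r v - v) atTop (nhds (Real.log r)) := by
    intro r h0 h1
    have hin : Tendsto (fun v => (1 - r) * Real.exp (-v) + r) atTop (nhds r) := by
      have he : Tendsto (fun v : ℝ => Real.exp (-v)) atTop (nhds 0) :=
        Real.tendsto_exp_atBot.comp tendsto_neg_atTop_atBot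
      simpa using (he.const_mul (1 - r)).add_const r
    have := ((Real.continuousAt_log h0.ne').tendsto).comp hin
    exact Tendsto.congr (fun v => (phi_sub h0 h1 (by exact h0) (by exact h1) hu0 hu1 v).symm) this
  have ht : Tendsto (fun v => v * 1 - K p q u v) atTop
      (nhds (-(u * Real.log p + (1 - u) * Real.log q))) := by
    have := ((hphi p hp0 hp1).const_mul u).add ((hphi q hq0 hq1).const_mul (1 - u))
    have heq : ∀ v, -(u * (phi p v - v) + (1 - u) * (phi q v - v)) = v * 1 - K p q u v := by
      intro v; rw [K]; ring
    exact Tendsto.congr heq this.neg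
  exact le_of_tendsto ht (Filter.Eventually.of_forall fun v => le_ciSup hb v)

end MVT


section Comp

variable {p q P' Q' P Q : ℝ}

lemma comp_log (hp0 : 0 < p) (hp1 : p < 1) (hP'0 : 0 < P') (hP'1 : P' < 1)
    (hQ'0 : 0 < Q') (hQ'1 : Q' < 1) (hP : P = p * P' + (1 - p) * Q') (v : ℝ) :
    Real.log (1 - P + Real.exp v * P) =
      Real.log (1 - p + Real.exp (phi P' v - phi Q' v) * p) + phi Q' v := by
  have hA := base_pos hP'0 hP'1 v
  have hB := base_pos hQ'0 hQ'1 v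
  have hE : Real.exp (phi P' v - phi Q' v) =
      (1 - P' + Real.exp v * P') / (1 - Q' + Real.exp v * Q') := by
    rw [Real.exp_sub, phi, phi, Real.exp_log hA, Real.exp_log hB]
  have hP0 : 0 < P := by nlinarith
  have hP1 : P < 1 := by nlinarith
  have hden := base_pos hP0 hP1 v
  have h1 : 1 - p + Real.exp (phi P' v - phi Q' v) * p =
      (1 - P + Real.exp v * P) / (1 - Q' + Real.exp v * Q') := by
    have hB' : (1 - Q' + Real.exp v * Q') ≠ 0 := hB.ne'
    rw [hE, hP]; field_simp; ring
  rw [h1, Real.log_div hden.ne' hB.ne', phi]; ring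

lemma comp_log_bot (hp0 : 0 < p) (hp1 : p < 1) (hP'0 : 0 < P') (hP'1 : P' < 1)
    (hQ'0 : 0 < Q') (hQ'1 : Q' < 1) (hP : P = p * P' + (1 - p) * Q') :
    Real.log (1 - P) =
      Real.log (1 - p + Real.exp (Real.log (1 - P') - Real.log (1 - Q')) * p) +
        Real.log (1 - Q') := by
  have hE : Real.exp (Real.log (1 - P') - Real.log (1 - Q')) = (1 - P') / (1 - Q') := by
    rw [Real.exp_sub, Real.exp_log (by linarith), Real.exp_log (by linarith)]
  have hP1 : P < 1 := by nlinarith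
  have h1 : 1 - p + (1 - P') / (1 - Q') * p = (1 - P) / (1 - Q') := by
    have hQ'ne : (1:ℝ) - Q' ≠ 0 := by linarith
    rw [hP]; field_simp; ring
  rw [hE, h1, Real.log_div (by linarith) (by linarith)]; ring

lemma comp_log_top (hp0 : 0 < p) (hp1 : p < 1) (hP'0 : 0 < P') (hP'1 : P' < 1)
    (hQ'0 : 0 < Q') (hQ'1 : Q' < 1) (hP : P = p * P' + (1 - p) * Q') :
    Real.log P =
      Real.log (1 - p + Real.exp (Real.log P' - Real.log Q') * p) + Real.log Q' := by
  have hE : Real.exp (Real.log P' - Real.log Q') = P' / Q' := by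
    rw [Real.exp_sub, Real.exp_log hP'0, Real.exp_log hQ'0]
  have hP0 : 0 < P := by nlinarith
  have h1 : 1 - p + P' / Q' * p = P / Q' := by
    have hQ'ne : Q' ≠ 0 := hQ'0.ne'
    rw [hP]; field_simp; ring
  rw [hE, h1, Real.log_div hP0.ne' hQ'0.ne']; ring

end Comp

theorem main {p q P' Q' P Q u r : ℝ}
    (hp0 : 0 < p) (hp1 : p < 1) (hq0 : 0 < q) (hq1 : q < 1)
    (hP'0 : 0 < P') (hP'1 : P' < 1) (hQ'0 : 0 < Q') (hQ'1 : Q' < 1)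
    (hP : P = p * P' + (1 - p) * Q') (hQ : Q = q * P' + (1 - q) * Q')
    (hu0 : 0 ≤ u) (hu1 : u ≤ 1) (hr0 : 0 ≤ r) (hr1 : r ≤ 1) :
    ∃ sstar : ℝ, sstar ∈ Set.Icc (0:ℝ) 1 ∧
      (⨆ v : ℝ, (v * sstar - K p q u v)) + (⨆ v : ℝ, (v * r - K P' Q' sstar v)) =
        (⨆ v : ℝ, (v * r - K P Q u v)) ∧
      ∀ s ∈ Set.Icc (0:ℝ) 1, s ≠ sstar →
        (⨆ v : ℝ, (v * r - K P Q u v)) <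
          (⨆ v : ℝ, (v * s - K p q u v)) + (⨆ v : ℝ, (v * r - K P' Q' s v)) := by
  have hP0 : 0 < P := by nlinarith
  have hP1 : P < 1 := by nlinarith
  have hQ0 : 0 < Q := by nlinarith
  have hQ1 : Q < 1 := by nlinarith
  set w : ℝ → ℝ := fun v => phi P' v - phi Q' v with hw
  -- the composition identity at the level of K
  have hKc : ∀ v, K P Q u v = K p q u (w v) + phi Q' v := by
    intro v
    have h1 := comp_log hp0 hp1 hP'0 hP'1 hQ'0 hQ'1 hP v
    have h2 := comp_log hq0 hq1 hP'0 hP'1 hQ'0 hQ'1 hQ v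
    simp only [K, phi, hw] at h1 h2 ⊢
    rw [h1, h2]; ring
  -- the key pointwise identity
  have hkey : ∀ v s, v * r - K P Q u v =
      (w v * s - K p q u (w v)) + (v * r - K P' Q' s v) := by
    intro v s
    have hwv : w v = phi P' v - phi Q' v := rfl
    rw [hKc v, hwv]
    simp only [K]
    ring
  -- part (a): the sup is a lower bound for every splitting
  have part_a : ∀ s, 0 ≤ s → s ≤ 1 →
      (⨆ v : ℝ, (v * r - K P Q u v)) ≤
        (⨆ v : ℝ, (v * s - K p q u v)) + (⨆ v : ℝ, (v * r - K P' Q' s v)) := by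
    intro s hs0 hs1
    refine ciSup_le fun v => ?_
    rw [hkey v s]
    exact add_le_add
      (le_ciSup (bdd hp0 hp1 hq0 hq1 hu0 hu1 hs0 hs1) (w v))
      (le_ciSup (bdd hP'0 hP'1 hQ'0 hQ'1 hs0 hs1 hr0 hr1) v)
  -- existence of an optimal interior splitting point
  have hexist : ∃ sstar : ℝ, (0 < sstar ∧ sstar < 1) ∧
      (⨆ v : ℝ, (v * sstar - K p q u v)) + (⨆ v : ℝ, (v * r - K P' Q' sstar v)) ≤
        (⨆ v : ℝ, (v * r - K P Q u v)) := by
    rcases eq_or_lt_of_le hr0 with h0 | hr0'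
    · -- r = 0
      subst h0
      set w0 : ℝ := Real.log (1 - P') - Real.log (1 - Q') with hw0
      refine ⟨K' p q u w0, ⟨K'_pos hp0 hp1 hq0 hq1 hu0 hu1 w0,
        K'_lt_one hp0 hp1 hq0 hq1 hu0 hu1 w0⟩, ?_⟩
      set sstar := K' p q u w0 with hss
      rw [sup_eq_crit hp0 hp1 hq0 hq1 hu0 hu1 hss.symm,
        sup_zero hP'0 hP'1 hQ'0 hQ'1 (le_of_lt (K'_pos hp0 hp1 hq0 hq1 hu0 hu1 w0))
          (le_of_lt (K'_lt_one hp0 hp1 hq0 hq1 hu0 hu1 w0)),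
        sup_zero hP0 hP1 hQ0 hQ1 hu0 hu1]
      have hbP := comp_log_bot hp0 hp1 hP'0 hP'1 hQ'0 hQ'1 hP
      have hbQ := comp_log_bot hq0 hq1 hP'0 hP'1 hQ'0 hQ'1 hQ
      refine le_of_eq ?_
      simp only [K, phi]
      rw [← hw0] at hbP hbQ
      linear_combination u * hbP + (1 - u) * hbQ + sstar * hw0
    rcases eq_or_lt_of_le hr1 with h1 | hr1'
    · -- r = 1
      subst h1
      set w1 : ℝ := Real.log P' - Real.log Q' with hw1
      refine ⟨K' p q u w1, ⟨K'_pos hp0 hp1 hq0 hq1 hu0 hu1 w1,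
        K'_lt_one hp0 hp1 hq0 hq1 hu0 hu1 w1⟩, ?_⟩
      set sstar := K' p q u w1 with hss
      rw [sup_eq_crit hp0 hp1 hq0 hq1 hu0 hu1 hss.symm,
        sup_one hP'0 hP'1 hQ'0 hQ'1 (le_of_lt (K'_pos hp0 hp1 hq0 hq1 hu0 hu1 w1))
          (le_of_lt (K'_lt_one hp0 hp1 hq0 hq1 hu0 hu1 w1)),
        sup_one hP0 hP1 hQ0 hQ1 hu0 hu1]
      have hbP := comp_log_top hp0 hp1 hP'0 hP'1 hQ'0 hQ'1 hP
      have hbQ := comp_log_top hq0 hq1 hP'0 hP'1 hQ'0 hQ'1 hQ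
      refine le_of_eq ?_
      simp only [K, phi]
      rw [← hw1] at hbP hbQ
      linear_combination u * hbP + (1 - u) * hbQ + sstar * hw1
    · -- r ∈ (0,1)
      obtain ⟨vst, hvst⟩ := K'_surj hP0 hP1 hQ0 hQ1 hu0 hu1 hr0' hr1'
      set sstar := K' p q u (w vst) with hss
      refine ⟨sstar, ⟨K'_pos hp0 hp1 hq0 hq1 hu0 hu1 (w vst),
        K'_lt_one hp0 hp1 hq0 hq1 hu0 hu1 (w vst)⟩, ?_⟩
      have hA := phi_hasDerivAt hP'0 hP'1 vst
      have hB := phi_hasDerivAt hQ'0 hQ'1 vst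
      have hwD : HasDerivAt w (phi' P' vst - phi' Q' vst) vst := hA.sub hB
      have hd2 : HasDerivAt (fun v => K p q u (w v) + phi Q' v)
          (K' p q u (w vst) * (phi' P' vst - phi' Q' vst) + phi' Q' vst) vst :=
        (((K_hasDerivAt hp0 hp1 hq0 hq1 u (w vst)).comp vst hwD)).add hB
      have hd1 : HasDerivAt (fun v => K p q u (w v) + phi Q' v) (K' P Q u vst) vst := by
        have hfun : K P Q u = fun v => K p q u (w v) + phi Q' v := funext hKc
        rw [← hfun]
        exact K_hasDerivAt hP0 hP1 hQ0 hQ1 u vst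
      have hdeq := hd1.unique hd2
      have hcrit2 : K' P' Q' sstar vst = r := by
        rw [K']
        linear_combination hvst - hdeq + (phi' Q' vst - phi' P' vst) * hss
      rw [sup_eq_crit hp0 hp1 hq0 hq1 hu0 hu1 hss.symm,
        sup_eq_crit hP'0 hP'1 hQ'0 hQ'1
          (le_of_lt (K'_pos hp0 hp1 hq0 hq1 hu0 hu1 (w vst)))
          (le_of_lt (K'_lt_one hp0 hp1 hq0 hq1 hu0 hu1 (w vst))) hcrit2]
      calc (w vst * sstar - K p q u (w vst)) + (vst * r - K P' Q' sstar vst)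
          = vst * r - K P Q u vst := (hkey vst sstar).symm
        _ ≤ _ := le_ciSup (bdd hP0 hP1 hQ0 hQ1 hu0 hu1 hr0 hr1) vst
  -- assemble
  obtain ⟨sstar, ⟨hs0', hs1'⟩, hle⟩ := hexist
  have heq := le_antisymm hle (part_a sstar hs0'.le hs1'.le)
  refine ⟨sstar, ⟨hs0'.le, hs1'.le⟩, heq, ?_⟩
  intro s hs hne
  set m : ℝ := (s + sstar) / 2 with hm
  have hm0 : 0 < m := by rw [hm]; linarith [hs.1]
  have hm1 : m < 1 := by rw [hm]; linarith [hs.2]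
  obtain ⟨vm, hvm⟩ := K'_surj hp0 hp1 hq0 hq1 hu0 hu1 hm0 hm1
  have hGm : (⨆ v : ℝ, (v * m - K p q u v)) = vm * m - K p q u vm :=
    sup_eq_crit hp0 hp1 hq0 hq1 hu0 hu1 hvm
  have hsne : s ≠ m := fun h => hne (by rw [hm] at h; linarith)
  have hsne' : sstar ≠ m := fun h => hne (by rw [hm] at h; linarith)
  have hGs : vm * s - K p q u vm < ⨆ v : ℝ, (v * s - K p q u v) := by
    obtain ⟨v, hv⟩ := strict_gt hp0 hp1 hq0 hq1 hu0 hu1 hs.1 hs.2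
      (by rw [hvm]; exact hsne)
    exact hv.trans_le (le_ciSup (bdd hp0 hp1 hq0 hq1 hu0 hu1 hs.1 hs.2) v)
  have hGs' : vm * sstar - K p q u vm < ⨆ v : ℝ, (v * sstar - K p q u v) := by
    obtain ⟨v, hv⟩ := strict_gt hp0 hp1 hq0 hq1 hu0 hu1 hs0'.le hs1'.le
      (by rw [hvm]; exact hsne')
    exact hv.trans_le (le_ciSup (bdd hp0 hp1 hq0 hq1 hu0 hu1 hs0'.le hs1'.le) v)
  have hH : (⨆ v : ℝ, (v * r - K P' Q' m v)) ≤
      ((⨆ v : ℝ, (v * r - K P' Q' s v)) + (⨆ v : ℝ, (v * r - K P' Q' sstar v))) / 2 := by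
    refine ciSup_le fun v => ?_
    have h1 := le_ciSup (bdd hP'0 hP'1 hQ'0 hQ'1 hs.1 hs.2 hr0 hr1) v
    have h2 := le_ciSup (bdd hP'0 hP'1 hQ'0 hQ'1 hs0'.le hs1'.le hr0 hr1) v
    have he : v * r - K P' Q' m v =
        ((v * r - K P' Q' s v) + (v * r - K P' Q' sstar v)) / 2 := by
      simp only [K, hm]; ring
    rw [he]; linarith
  have hpa := part_a m hm0.le hm1.le
  rw [hGm] at hpa
  have hmid : vm * m - K p q u vm =
      ((vm * s - K p q u vm) + (vm * sstar - K p q u vm)) / 2 := by rw [hm]; ring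
  linarith



lemma pq_bounds {lam mu : ℝ} (hlam : 0 < lam) (hmu : 0 < mu) {τ : ℝ} (hτ : 0 < τ) :
    0 < p01 lam mu τ ∧ p01 lam mu τ < 1 ∧ 0 < p11 lam mu τ ∧ p11 lam mu τ < 1 := by
  have hc : 0 < lam + mu := by linarith
  have hE1 : Real.exp (-(τ * (lam + mu))) < 1 := by
    calc Real.exp (-(τ * (lam + mu))) < Real.exp 0 :=
          Real.exp_lt_exp.2 (by nlinarith)
      _ = 1 := Real.exp_zero
  have hE0 := Real.exp_pos (-(τ * (lam + mu)))
  unfold p01 p11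
  exact ⟨div_pos (by nlinarith) hc, (div_lt_one hc).2 (by nlinarith),
    div_pos (by nlinarith) hc, (div_lt_one hc).2 (by nlinarith)⟩

lemma CK11 {lam mu : ℝ} (hlam : 0 < lam) (hmu : 0 < mu) (t τ : ℝ) :
    p11 lam mu (t + τ) =
      p11 lam mu t * p11 lam mu τ + (1 - p11 lam mu t) * p01 lam mu τ := by
  have hc : lam + mu ≠ 0 := by positivity
  unfold p11 p01
  have hsplit : Real.exp (-((t + τ) * (lam + mu))) =
      Real.exp (-(t * (lam + mu))) * Real.exp (-(τ * (lam + mu))) := by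
    rw [← Real.exp_add]; ring_nf
  rw [hsplit]; field_simp; ring

lemma CK01 {lam mu : ℝ} (hlam : 0 < lam) (hmu : 0 < mu) (t τ : ℝ) :
    p01 lam mu (t + τ) =
      p01 lam mu t * p11 lam mu τ + (1 - p01 lam mu t) * p01 lam mu τ := by
  have hc : lam + mu ≠ 0 := by positivity
  unfold p11 p01
  have hsplit : Real.exp (-((t + τ) * (lam + mu))) =
      Real.exp (-(t * (lam + mu))) * Real.exp (-(τ * (lam + mu))) := by
    rw [← Real.exp_add]; ring_nf
  rw [hsplit]; field_simp; ring

end RateAux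

/-- Uniqueness of the optimal midpoint in the two-step representation of the rate function. -/
theorem stmt_8 (lam mu t T : ℝ) (hlam : 0 < lam) (hmu : 0 < mu) (ht : 0 < t) (htT : t < T)
    (u r : ℝ) (hu : u ∈ Set.Icc (0:ℝ) 1) (hr : r ∈ Set.Icc (0:ℝ) 1) :
    ∃ sstar : ℝ, sstar ∈ Set.Icc (0:ℝ) 1 ∧
      I1 lam mu t u sstar + I1 lam mu (T - t) sstar r = I1 lam mu T u r ∧
      ∀ s ∈ Set.Icc (0:ℝ) 1, s ≠ sstar →
        I1 lam mu T u r < I1 lam mu t u s + I1 lam mu (T - t) s r := by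
  have hτ : 0 < T - t := by linarith
  obtain ⟨hq0, hq1, hp0, hp1⟩ := RateAux.pq_bounds hlam hmu ht
  obtain ⟨hQ'0, hQ'1, hP'0, hP'1⟩ := RateAux.pq_bounds hlam hmu hτ
  have hTeq : T = t + (T - t) := by ring
  have hCK1 : p11 lam mu T = p11 lam mu t * p11 lam mu (T - t) +
      (1 - p11 lam mu t) * p01 lam mu (T - t) := by
    conv_lhs => rw [hTeq]
    exact RateAux.CK11 hlam hmu t (T - t)
  have hCK0 : p01 lam mu T = p01 lam mu t * p11 lam mu (T - t) +
      (1 - p01 lam mu t) * p01 lam mu (T - t) := by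
    conv_lhs => rw [hTeq]
    exact RateAux.CK01 hlam hmu t (T - t)
  exact RateAux.main hp0 hp1 hq0 hq1 hP'0 hP'1 hQ'0 hQ'1 hCK1 hCK0 hu.1 hu.2 hr.1 hr.2
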